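/- Let F be a finite field with q ≥ 2 elements and s ≥ 1. For ANY convolution computation strategy, i.e., any families of functions f_i mapping the input a to a polynomial f_i(a) ∈ F[y] of degree < s and g_i mapping the input b to a polynomial g_i(b) ∈ F[y] of degree < s, and ANY subset S ⊆ {0,…,N−1} with |S| < max{m, n}, there is no function D such that D((f_i(a)·g_i(b))_{i∈S}) = a(y)·b(y) for all inputs a, b. Consequently, the optimum recovery threshold for distributed convolution satisfies K*_conv ≥ max{m, n}. -/

import Mathlib

open Polynomial BigOperators

lemma coeff_blockSum {F : Type*} [Semiring F] {s m : ℕ} (d : Fin m → F[X])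
    (hd : ∀ j, (d j).degree < (s : WithBot ℕ)) (j : Fin m) (t : ℕ) (ht : t < s) :
    (∑ k : Fin m, d k * X ^ ((k : ℕ) * s)).coeff ((j : ℕ) * s + t) = (d j).coeff t := by
  rw [finset_sum_coeff]
  rw [Finset.sum_eq_single j]
  · rw [coeff_mul_X_pow', if_pos (Nat.le_add_right _ _), Nat.add_sub_cancel_left]
  · intro k _ hk
    rw [coeff_mul_X_pow']
    rcases lt_or_gt_of_ne (Fin.val_ne_of_ne hk) with hlt | hgt
    · have h1 : (k : ℕ) * s + s ≤ (j : ℕ) * s := by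
        have := Nat.mul_le_mul_right s (Nat.succ_le_of_lt hlt)
        rwa [Nat.succ_mul] at this
      rw [if_pos (le_trans (Nat.le_add_right _ _) (le_trans h1 (Nat.le_add_right _ _)))]
      apply Polynomial.coeff_eq_zero_of_degree_lt
      refine lt_of_lt_of_le (hd k) ?_
      have h2 : s ≤ (j : ℕ) * s + t - (k : ℕ) * s :=
        Nat.le_sub_of_add_le (by omega)
      exact_mod_cast Nat.cast_le.mpr h2
    · rw [if_neg]
      have h1 : (j : ℕ) * s + s ≤ (k : ℕ) * s := by
        have := Nat.mul_le_mul_right s (Nat.succ_le_of_lt hgt)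
        rwa [Nat.succ_mul] at this
      omega
  · intro h; exact absurd (Finset.mem_univ j) h

lemma blockSum_inj {F : Type*} [Semiring F] {s m : ℕ} (a a' : Fin m → F[X])
    (ha : ∀ j, (a j).degree < (s : WithBot ℕ)) (ha' : ∀ j, (a' j).degree < (s : WithBot ℕ))
    (h : ∑ j : Fin m, a j * X ^ ((j : ℕ) * s) = ∑ j : Fin m, a' j * X ^ ((j : ℕ) * s)) :
    a = a' := by
  funext j
  ext t
  rcases lt_or_ge t s with ht | ht
  · rw [← coeff_blockSum a ha j t ht, ← coeff_blockSum a' ha' j t ht, h]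
  · rw [Polynomial.coeff_eq_zero_of_degree_lt, Polynomial.coeff_eq_zero_of_degree_lt]
    · exact lt_of_lt_of_le (ha' j) (by exact_mod_cast Nat.cast_le.mpr ht)
    · exact lt_of_lt_of_le (ha j) (by exact_mod_cast Nat.cast_le.mpr ht)

lemma indicator_deg {F : Type*} [Semiring F] [Nontrivial F] {n s : ℕ} (hs : 0 < s) (k : Fin n) :
    ((if (k : ℕ) = 0 then (1 : F[X]) else 0)).degree < (s : WithBot ℕ) := by
  split
  · rw [Polynomial.degree_one]
    exact_mod_cast hs
  · rw [Polynomial.degree_zero]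
    exact bot_lt_iff_ne_bot.mpr (by simp)

lemma indicator_sum {F : Type*} [Semiring F] [Nontrivial F] {n s : ℕ} (hn : 0 < n) :
    ∑ k : Fin n, (if (k : ℕ) = 0 then (1 : F[X]) else 0) * X ^ ((k : ℕ) * s) = 1 := by
  haveI : NeZero n := ⟨hn.ne'⟩
  rw [Finset.sum_eq_single (0 : Fin n)]
  · simp
  · intro b _ hb
    rw [if_neg, zero_mul]
    exact fun h => hb (Fin.ext (by simp [h]))
  · intro h; exact absurd (Finset.mem_univ _) h

lemma conv_core {F : Type*} [Field F] [Fintype F] {s m N : ℕ} (hs : 0 < s)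
    (S : Finset (Fin N)) (hS : S.card < m)
    (φ : Fin N → (Fin m → F[X]) → F[X])
    (hφ : ∀ (i : Fin N) (a : Fin m → F[X]),
      (∀ j, (a j).degree < (s : WithBot ℕ)) → (φ i a).degree < (s : WithBot ℕ))
    (c : {i : Fin N // i ∈ S} → F[X])
    (D : ({i : Fin N // i ∈ S} → F[X]) → F[X])
    (hD : ∀ a : Fin m → F[X], (∀ j, (a j).degree < (s : WithBot ℕ)) →
      D (fun i => φ i.1 a * c i) = ∑ j : Fin m, a j * X ^ ((j : ℕ) * s)) : False := by
  set toPoly : (Fin s → F) → F[X] :=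
    fun v => (((Polynomial.degreeLTEquiv F s).symm v : Polynomial.degreeLT F s) : F[X])
    with htoPoly
  have htp_deg : ∀ v, (toPoly v).degree < (s : WithBot ℕ) := by
    intro v
    have := ((Polynomial.degreeLTEquiv F s).symm v).2
    rwa [Polynomial.mem_degreeLT] at this
  have htp_inj : Function.Injective toPoly := by
    intro v w hvw
    have := Subtype.ext (p := fun p => p ∈ Polynomial.degreeLT F s) hvw
    exact (Polynomial.degreeLTEquiv F s).symm.injective this
  set Φ : (Fin m → Fin s → F) → ({i : Fin N // i ∈ S} → Fin s → F) :=
    fun v i => Polynomial.degreeLTEquiv F s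
      ⟨φ i.1 (fun j => toPoly (v j)), Polynomial.mem_degreeLT.mpr
        (hφ i.1 _ (fun j => htp_deg (v j)))⟩ with hΦ
  have hcard : Fintype.card ({i : Fin N // i ∈ S} → Fin s → F)
      < Fintype.card (Fin m → Fin s → F) := by
    rw [Fintype.card_fun, Fintype.card_fun, Fintype.card_fun, Fintype.card_fun,
      Fintype.card_coe, Fintype.card_fin, Fintype.card_fin, ← pow_mul, ← pow_mul,
      mul_comm s m, mul_comm s S.card]
    exact Nat.pow_lt_pow_right Fintype.one_lt_card ((Nat.mul_lt_mul_right hs).mpr hS)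
  obtain ⟨v, w, hvw, hΦeq⟩ := Fintype.exists_ne_map_eq_of_card_lt Φ hcard
  set a : Fin m → F[X] := fun j => toPoly (v j) with ha
  set a' : Fin m → F[X] := fun j => toPoly (w j) with ha'
  have hdeg : ∀ j, (a j).degree < (s : WithBot ℕ) := fun j => htp_deg (v j)
  have hdeg' : ∀ j, (a' j).degree < (s : WithBot ℕ) := fun j => htp_deg (w j)
  have hsame : (fun i : {i : Fin N // i ∈ S} => φ i.1 a * c i)
      = fun i => φ i.1 a' * c i := by
    funext i
    have h0 := (Polynomial.degreeLTEquiv F s).injective (congrFun hΦeq i)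
    have h2 : φ i.1 a = φ i.1 a' := congrArg Subtype.val h0
    rw [h2]
  have h3 : (∑ j : Fin m, a j * X ^ ((j : ℕ) * s))
      = ∑ j : Fin m, a' j * X ^ ((j : ℕ) * s) := by
    rw [← hD a hdeg, ← hD a' hdeg', hsame]
  have : a = a' := blockSum_inj a a' hdeg hdeg' h3
  apply hvw
  funext j
  exact htp_inj (congrFun this j)

/-- converse for distributed convolution over a finite field. For any
convolution computation strategy (families `fᵢ, gᵢ` mapping the block inputs to
stored polynomials of degree `< s`) and any subset `S` of workers with
`|S| < max{m, n}`, no decoding function can recover the convolution `a(y)·b(y)` from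
the products `(fᵢ(a)·gᵢ(b))_{i∈S}`; consequently every `k`-recoverable strategy
satisfies `k ≥ max{m, n}`, i.e. `K*_conv ≥ max{m, n}`. -/
theorem conv_recovery_converse {F : Type*} [Field F] [Fintype F] {s m n N : ℕ}
    (hs : 0 < s) (hm : 0 < m) (hn : 0 < n)
    (f : Fin N → (Fin m → F[X]) → F[X]) (g : Fin N → (Fin n → F[X]) → F[X])
    (hf : ∀ (i : Fin N) (a : Fin m → F[X]),
      (∀ j, (a j).degree < (s : WithBot ℕ)) → (f i a).degree < (s : WithBot ℕ))
    (hg : ∀ (i : Fin N) (b : Fin n → F[X]),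
      (∀ k, (b k).degree < (s : WithBot ℕ)) → (g i b).degree < (s : WithBot ℕ)) :
    (∀ S : Finset (Fin N), S.card < max m n →
      ¬ ∃ D : ({i : Fin N // i ∈ S} → F[X]) → F[X],
          ∀ (a : Fin m → F[X]) (b : Fin n → F[X]),
            (∀ j, (a j).degree < (s : WithBot ℕ)) →
            (∀ k, (b k).degree < (s : WithBot ℕ)) →
            D (fun i => f i.1 a * g i.1 b)
              = (∑ j : Fin m, a j * X ^ ((j : ℕ) * s)) *
                (∑ k : Fin n, b k * X ^ ((k : ℕ) * s)))
    ∧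
    (∀ k : ℕ, k ≤ N →
      (∀ S : Finset (Fin N), S.card = k →
        ∃ D : ({i : Fin N // i ∈ S} → F[X]) → F[X],
          ∀ (a : Fin m → F[X]) (b : Fin n → F[X]),
            (∀ j, (a j).degree < (s : WithBot ℕ)) →
            (∀ k', (b k').degree < (s : WithBot ℕ)) →
            D (fun i => f i.1 a * g i.1 b)
              = (∑ j : Fin m, a j * X ^ ((j : ℕ) * s)) *
                (∑ k' : Fin n, b k' * X ^ ((k' : ℕ) * s))) →
      max m n ≤ k) := by
  have part1 : ∀ S : Finset (Fin N), S.card < max m n →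
      ¬ ∃ D : ({i : Fin N // i ∈ S} → F[X]) → F[X],
          ∀ (a : Fin m → F[X]) (b : Fin n → F[X]),
            (∀ j, (a j).degree < (s : WithBot ℕ)) →
            (∀ k, (b k).degree < (s : WithBot ℕ)) →
            D (fun i => f i.1 a * g i.1 b)
              = (∑ j : Fin m, a j * X ^ ((j : ℕ) * s)) *
                (∑ k : Fin n, b k * X ^ ((k : ℕ) * s)) := by
    intro S hS ⟨D, hD⟩
    rcases lt_max_iff.mp hS with hSm | hSn
    · -- pigeonhole on a; fix b as the indicator
      set b : Fin n → F[X] := fun k => if (k : ℕ) = 0 then 1 else 0 with hb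
      have hbdeg : ∀ k, (b k).degree < (s : WithBot ℕ) := fun k => indicator_deg hs k
      have hB : (∑ k : Fin n, b k * X ^ ((k : ℕ) * s)) = 1 := indicator_sum hn
      exact conv_core hs S hSm f hf (fun i => g i.1 b) D (fun a hadeg => by
        rw [hD a b hadeg hbdeg, hB, mul_one])
    · -- pigeonhole on b; fix a as the indicator
      set a : Fin m → F[X] := fun j => if (j : ℕ) = 0 then 1 else 0 with ha
      have hadeg : ∀ j, (a j).degree < (s : WithBot ℕ) := fun j => indicator_deg hs j
      have hA : (∑ j : Fin m, a j * X ^ ((j : ℕ) * s)) = 1 := indicator_sum hm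
      refine conv_core hs S hSn g hg (fun i => f i.1 a) D (fun b hbdeg => ?_)
      have := hD a b hadeg hbdeg
      rw [hA, one_mul] at this
      rw [show (fun i : {i : Fin N // i ∈ S} => g i.1 b * f i.1 a)
        = fun i => f i.1 a * g i.1 b from funext fun i => mul_comm _ _]
      exact this
  refine ⟨part1, ?_⟩
  intro k hk hstrat
  by_contra hlt
  push_neg at hlt
  obtain ⟨S, _, hScard⟩ := Finset.exists_subset_card_eq
    (s := (Finset.univ : Finset (Fin N))) (by simpa using hk)
  exact part1 S (hScard ▸ hlt) (hstrat S hScard)
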